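/- (Asai's product formula) Let N ≥ 1 and z ∈ ℍ, and set q = e^{2πiz}. Then ∏_{d | N} Δ(Nz/d)^{μ(d)} = q^{φ(N)} · ∏_{n=1}^{∞} Φ_N(qⁿ)^{24}, where the infinite product converges absolutely, μ is the Möbius function (exponent −1 meaning the reciprocal, which exists since Δ is nowhere zero on ℍ), φ is Euler's totient function, and Φ_N is the N-th cyclotomic polynomial. -/

import Mathlib

noncomputable section
open Complex Real MeasureTheory UpperHalfPlane Filter Topology
open scoped UpperHalfPlane

/-- The discriminant modular form `Δ(z) = e^{2πiz} ∏_{n ≥ 1} (1 - e^{2πinz})^{24}`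
(defined for any `z : ℂ`, intended for `Im z > 0`). -/
def Delta (z : ℂ) : ℂ :=
  Complex.exp (2 * (π : ℂ) * Complex.I * z) *
    ∏' n : ℕ, (1 - Complex.exp (2 * (π : ℂ) * Complex.I * ((n : ℂ) + 1) * z)) ^ 24

open Polynomial
open scoped ArithmeticFunction
open scoped ArithmeticFunction.Moebius
lemma aux_pow_ne_one {x : ℂ} (hx : ‖x‖ < 1) {k : ℕ} (hk : 0 < k) : x ^ k - 1 ≠ 0 := by
  intro h
  have : ‖x ^ k‖ < 1 := by
    rw [norm_pow]
    exact pow_lt_one₀ (norm_nonneg x) hx hk.ne'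
  rw [sub_eq_zero.mp h] at this
  simp at this

lemma aux_one_sub_ne {x : ℂ} (hx : ‖x‖ < 1) {k : ℕ} (hk : 0 < k) : (1 : ℂ) - x ^ k ≠ 0 := by
  intro h
  apply aux_pow_ne_one hx hk
  linear_combination -h

lemma aux_cyc_ne_zero {x : ℂ} (hx : ‖x‖ < 1) {n : ℕ} (hn : 0 < n) :
    eval x (cyclotomic n ℂ) ≠ 0 := by
  have h := congrArg (eval x) (prod_cyclotomic_eq_X_pow_sub_one hn ℂ)
  rw [eval_prod, eval_sub, eval_pow, eval_X, eval_one] at h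
  have hne : ∏ i ∈ n.divisors, eval x (cyclotomic i ℂ) ≠ 0 := h ▸ aux_pow_ne_one hx hn
  exact Finset.prod_ne_zero_iff.mp hne n (Nat.mem_divisors_self n hn.ne')

lemma aux_cyc_moebius {x : ℂ} (hx : ‖x‖ < 1) {N : ℕ} (hN : 0 < N) :
    ∏ d ∈ N.divisors, ((x : ℂ) ^ (N / d) - 1) ^ (μ d : ℤ) = eval x (cyclotomic N ℂ) := by
  have key := (ArithmeticFunction.prod_eq_iff_prod_pow_moebius_eq_of_nonzero
    (R := ℂ) (f := fun n => eval x (cyclotomic n ℂ)) (g := fun n => x ^ n - 1)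
    (fun n hn => aux_cyc_ne_zero hx hn) (fun n hn => aux_pow_ne_one hx hn)).mp ?_ N hN
  · rw [← key, ← Nat.prod_divisorsAntidiagonal (fun i j => ((x : ℂ) ^ j - 1) ^ (μ i : ℤ))]
  · intro n hn
    have h := congrArg (eval x) (prod_cyclotomic_eq_X_pow_sub_one hn ℂ)
    rwa [eval_prod, eval_sub, eval_pow, eval_X, eval_one] at h

lemma aux_totient_moebius {N : ℕ} (hN : 0 < N) :
    ∑ d ∈ N.divisors, (μ d : ℤ) * (N / d : ℕ) = (Nat.totient N : ℤ) := by
  have key := (ArithmeticFunction.sum_eq_iff_sum_smul_moebius_eq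
    (R := ℤ) (f := fun n => (Nat.totient n : ℤ)) (g := fun n => (n : ℤ))).mp ?_ N hN
  · rw [Nat.sum_divisorsAntidiagonal (fun i j => (μ i : ℤ) • (j : ℤ))] at key
    rw [← key]
    simp [zsmul_eq_mul]
  · intro n hn
    exact_mod_cast congrArg (Nat.cast : ℕ → ℤ) (Nat.sum_totient n)

lemma aux_cyc_pow24 {x : ℂ} (hx : ‖x‖ < 1) {N : ℕ} (hN : 0 < N) :
    (eval x (cyclotomic N ℂ)) ^ (24 : ℕ)
      = ∏ d ∈ N.divisors, (1 - x ^ (N / d)) ^ ((24 : ℤ) * (μ d : ℤ)) := by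
  rw [← aux_cyc_moebius hx hN, ← Finset.prod_pow]
  refine Finset.prod_congr rfl fun d hd => ?_
  have h1 : ((x ^ (N / d) - 1) ^ (μ d : ℤ)) ^ (24 : ℕ)
      = (x ^ (N / d) - 1) ^ ((24 : ℤ) * (μ d : ℤ)) := by
    rw [← zpow_natCast _ 24, ← zpow_mul, mul_comm]
    norm_num
  rw [h1, show (x ^ (N / d) - 1 : ℂ) = (-1) * (1 - x ^ (N / d)) by ring, mul_zpow,
    zpow_mul, show ((-1 : ℂ)) ^ (24 : ℤ) = 1 by norm_num, one_zpow, one_mul]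

lemma aux_summable_log {q : ℂ} (hq : ‖q‖ < 1) {m : ℕ} (hm : 0 < m) :
    Summable (fun n : ℕ => Complex.log (1 - q ^ ((n + 1) * m))) := by
  apply Summable.clog_one_sub
  apply Summable.of_norm
  have h0 : ∀ n : ℕ, ‖q ^ ((n + 1) * m)‖ ≤ ‖q‖ ^ (n + 1) := by
    intro n
    rw [norm_pow]
    exact pow_le_pow_of_le_one (norm_nonneg q) hq.le (Nat.le_mul_of_pos_right _ hm)
  have hg : Summable (fun n : ℕ => ‖q‖ ^ (n + 1)) := by
    exact (summable_geometric_of_lt_one (norm_nonneg q) hq).mul_left ‖q‖ |>.congr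
      (fun n => by rw [pow_succ, mul_comm])
  exact Summable.of_nonneg_of_le (fun n => norm_nonneg _) h0 hg

lemma aux_hasProd {q : ℂ} (hq : ‖q‖ < 1) {m : ℕ} (hm : 0 < m) :
    HasProd (fun n : ℕ => (1 - q ^ ((n + 1) * m)) ^ (24 : ℕ))
      (Complex.exp (24 * ∑' n : ℕ, Complex.log (1 - q ^ ((n + 1) * m)))) := by
  have h := (((aux_summable_log hq hm).hasSum.mul_left 24)).cexp
  have he : (cexp ∘ fun n : ℕ => 24 * Complex.log (1 - q ^ ((n + 1) * m)))
      = fun n : ℕ => (1 - q ^ ((n + 1) * m)) ^ (24 : ℕ) := by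
    funext n
    have hne : (1 : ℂ) - q ^ ((n + 1) * m) ≠ 0 :=
      aux_one_sub_ne hq (Nat.mul_pos n.succ_pos hm)
    simp only [Function.comp_apply]
    rw [show (24 : ℂ) * Complex.log (1 - q ^ ((n + 1) * m))
        = ((24 : ℕ) : ℂ) * Complex.log (1 - q ^ ((n + 1) * m)) by norm_num,
      Complex.exp_nat_mul, Complex.exp_log hne]
  rwa [he] at h

lemma aux_delta_eq {z : ℂ} {m : ℕ} (hm : 0 < m)
    (hq : ‖Complex.exp (2 * (π : ℂ) * Complex.I * z)‖ < 1) :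
    Delta ((m : ℂ) * z) = (Complex.exp (2 * (π : ℂ) * Complex.I * z)) ^ m *
      Complex.exp (24 * ∑' n : ℕ, Complex.log
        (1 - (Complex.exp (2 * (π : ℂ) * Complex.I * z)) ^ ((n + 1) * m))) := by
  set q := Complex.exp (2 * (π : ℂ) * Complex.I * z) with hqdef
  unfold Delta
  have h1 : Complex.exp (2 * (π : ℂ) * Complex.I * ((m : ℂ) * z)) = q ^ m := by
    rw [hqdef, ← Complex.exp_nat_mul]
    congr 1
    ring
  have h2 : ∀ n : ℕ, Complex.exp (2 * (π : ℂ) * Complex.I * ((n : ℂ) + 1) * ((m : ℂ) * z))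
      = q ^ ((n + 1) * m) := by
    intro n
    rw [hqdef, ← Complex.exp_nat_mul]
    congr 1
    push_cast
    ring
  rw [h1]
  congr 1
  rw [← (aux_hasProd hq hm).tprod_eq]
  exact tprod_congr fun n => by rw [h2 n]

open Polynomial in
open scoped ArithmeticFunction in
/-- Asai's product formula: for `N ≥ 1`, `z ∈ ℍ` and `q = e^{2πiz}`,
`∏_{d ∣ N} Δ(Nz/d)^{μ(d)} = q^{φ(N)} ∏_{n ≥ 1} Φ_N(qⁿ)^{24}`,
the infinite product converging. -/
theorem stmt8 (N : ℕ) (hN : 1 ≤ N) (z : ℍ) :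
    Multipliable (fun n : ℕ =>
      (Polynomial.eval ((Complex.exp (2 * (π : ℂ) * Complex.I * (z : ℂ))) ^ (n + 1))
        (Polynomial.cyclotomic N ℂ)) ^ 24) ∧
    (∏ d ∈ N.divisors, Delta ((N : ℂ) * (z : ℂ) / (d : ℂ)) ^ ((ArithmeticFunction.moebius d : ℤ)))
      = (Complex.exp (2 * (π : ℂ) * Complex.I * (z : ℂ))) ^ (Nat.totient N) *
          ∏' n : ℕ,
            (Polynomial.eval ((Complex.exp (2 * (π : ℂ) * Complex.I * (z : ℂ))) ^ (n + 1))
              (Polynomial.cyclotomic N ℂ)) ^ 24 := by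
  have hz : 0 < (z : ℂ).im := z.2
  set q : ℂ := Complex.exp (2 * (π : ℂ) * Complex.I * (z : ℂ)) with hqdef
  have hq : ‖q‖ < 1 := by
    rw [hqdef, Complex.norm_exp, Real.exp_lt_one_iff]
    have hre : (2 * (π : ℂ) * Complex.I * (z : ℂ)).re = -(2 * π * (z : ℂ).im) := by
      simp [Complex.mul_re, Complex.mul_im]
    rw [hre]
    have := Real.pi_pos
    nlinarith
  have hN0 : 0 < N := hN
  set S : ℕ → ℂ := fun m => ∑' n : ℕ, Complex.log (1 - q ^ ((n + 1) * m)) with hSdef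
  have hdivpos : ∀ d ∈ N.divisors, 0 < N / d := fun d hd =>
    Nat.div_pos (Nat.le_of_dvd hN0 (Nat.mem_divisors.mp hd).1) (Nat.pos_of_mem_divisors hd)
  have hs : ∀ d ∈ N.divisors, Summable
      (fun n : ℕ => (((24 : ℤ) * (μ d : ℤ) : ℤ) : ℂ) * Complex.log (1 - q ^ ((n + 1) * (N / d)))) :=
    fun d hd => (aux_summable_log hq (hdivpos d hd)).mul_left _
  have hsum : HasSum
      (fun n : ℕ => ∑ d ∈ N.divisors,
        (((24 : ℤ) * (μ d : ℤ) : ℤ) : ℂ) * Complex.log (1 - q ^ ((n + 1) * (N / d))))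
      (∑ d ∈ N.divisors, (((24 : ℤ) * (μ d : ℤ) : ℤ) : ℂ) * S (N / d)) := by
    have h := (summable_sum hs).hasSum
    rwa [Summable.tsum_finsetSum hs, Finset.sum_congr rfl
      (fun d hd => by rw [tsum_mul_left])] at h
  have hc : HasProd
      (fun n : ℕ => (eval (q ^ (n + 1)) (cyclotomic N ℂ)) ^ (24 : ℕ))
      (Complex.exp (∑ d ∈ N.divisors, (((24 : ℤ) * (μ d : ℤ) : ℤ) : ℂ) * S (N / d))) := by
    have h := hsum.cexp
    have he : (cexp ∘ fun n : ℕ => ∑ d ∈ N.divisors,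
        (((24 : ℤ) * (μ d : ℤ) : ℤ) : ℂ) * Complex.log (1 - q ^ ((n + 1) * (N / d))))
        = fun n : ℕ => (eval (q ^ (n + 1)) (cyclotomic N ℂ)) ^ (24 : ℕ) := by
      funext n
      have hx : ‖q ^ (n + 1)‖ < 1 := by
        rw [norm_pow]
        exact pow_lt_one₀ (norm_nonneg q) hq n.succ_ne_zero
      simp only [Function.comp_apply]
      rw [Complex.exp_sum, aux_cyc_pow24 hx hN0]
      refine Finset.prod_congr rfl fun d hd => ?_
      have hne : (1 : ℂ) - q ^ ((n + 1) * (N / d)) ≠ 0 :=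
        aux_one_sub_ne hq (Nat.mul_pos n.succ_pos (hdivpos d hd))
      rw [Complex.exp_int_mul, Complex.exp_log hne, ← pow_mul]
    rwa [he] at h
  refine ⟨hc.multipliable, ?_⟩
  have hdelta : ∀ d ∈ N.divisors,
      Delta ((N : ℂ) * (z : ℂ) / (d : ℂ)) = q ^ (N / d) * Complex.exp (24 * S (N / d)) := by
    intro d hd
    have hd0 : (d : ℂ) ≠ 0 := Nat.cast_ne_zero.mpr (Nat.pos_of_mem_divisors hd).ne'
    have harg : (N : ℂ) * (z : ℂ) / (d : ℂ) = ((N / d : ℕ) : ℂ) * (z : ℂ) := by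
      rw [Nat.cast_div (Nat.mem_divisors.mp hd).1 hd0]
      ring
    rw [harg, aux_delta_eq (hdivpos d hd) hq]
  rw [Finset.prod_congr rfl (fun d hd => by rw [hdelta d hd])]
  have hstep : ∀ d ∈ N.divisors, (q ^ (N / d) * Complex.exp (24 * S (N / d))) ^ (μ d : ℤ)
      = Complex.exp ((((μ d : ℤ) * (N / d : ℕ) : ℤ) : ℂ) * (2 * (π : ℂ) * Complex.I * (z : ℂ)))
        * Complex.exp ((((24 : ℤ) * (μ d : ℤ) : ℤ) : ℂ) * S (N / d)) := by
    intro d hd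
    rw [mul_zpow]
    congr 1
    · generalize (N / d : ℕ) = m
      rw [hqdef, ← Complex.exp_nat_mul, ← Complex.exp_int_mul]
      congr 1
      push_cast
      ring
    · rw [← Complex.exp_int_mul]
      congr 1
      push_cast
      ring
  rw [Finset.prod_congr rfl hstep, Finset.prod_mul_distrib, ← Complex.exp_sum, ← Complex.exp_sum,
    hc.tprod_eq]
  congr 1
  rw [← Finset.sum_mul, hqdef, ← Complex.exp_nat_mul]
  congr 1
  have htot : (∑ d ∈ N.divisors, (((μ d : ℤ) * (N / d : ℕ) : ℤ) : ℂ)) = ((Nat.totient N : ℕ) : ℂ) := by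
    exact_mod_cast congrArg (Int.cast : ℤ → ℂ) (aux_totient_moebius hN0)
  rw [htot]
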